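/- arXiv:1810.04388 — 2 statements merged into one kernel-verified Lean document; each statement's English description precedes it below -/
import Mathlib

section
/- Let ε > 0 and let {u,v} ∈ K satisfy the link condition and be (p,ε)-admissible, and let a ∈ ℝ and b = a + ε. For every p-chain c of K'_a over ℤ/2, ξ_#(ψ(c)) = c as p-chains of K'_b; that is, the composite ξ_# ∘ ψ equals the inclusion of chains of K'_a into chains of K'_b. -/
open Classical Finset

noncomputable section

variable {V : Type*} [Fintype V] [DecidableEq V]

/-- `K` is a finite abstract simplicial complex on the vertex set `V`. -/
def IsComplex (K : Finset (Finset V)) : Prop :=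
  (∀ σ ∈ K, σ.Nonempty) ∧ ∀ σ ∈ K, ∀ τ : Finset V, τ ⊆ σ → τ.Nonempty → τ ∈ K

/-- `h` is a height function on `K`. -/
def IsHeight (K : Finset (Finset V)) (h : Finset V → ℝ) : Prop :=
  ∀ σ ∈ K, ∀ τ ∈ K, σ ⊆ τ → h σ ≤ h τ

/-- The sublevel complex `K_a`. -/
def sublevel (K : Finset (Finset V)) (h : Finset V → ℝ) (a : ℝ) : Finset (Finset V) :=
  K.filter fun σ => h σ ≤ a

/-- The vertex map sending `v` to `u` and fixing all other vertices. -/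
def cmap (u v : V) : V → V := fun x => if x = v then u else x

/-- The contraction `ξ` on simplices. -/
def xi (u v : V) (σ : Finset V) : Finset V := σ.image (cmap u v)

/-- The contracted complex `ξ(K)`. -/
def contract (u v : V) (K : Finset (Finset V)) : Finset (Finset V) := K.image (xi u v)

/-- The link of a simplex `σ` in `K`. -/
def lk (K : Finset (Finset V)) (σ : Finset V) : Finset (Finset V) :=
  K.filter fun τ => τ ∩ σ = ∅ ∧ τ ∪ σ ∈ K

/-- The edge `{u,v}` satisfies the link condition. -/
def LinkCond (K : Finset (Finset V)) (u v : V) : Prop :=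
  lk K {u, v} = lk K {u} ∩ lk K {v}

/-- The mod-2 boundary of a chain: `∂c(τ)` is the mod-2 number of simplices of `c`
containing `τ` as a facet. -/
def bdry (c : Finset V → ZMod 2) : Finset V → ZMod 2 := fun τ =>
  ∑ σ ∈ univ.filter (fun σ : Finset V => τ ⊆ σ ∧ σ.card = τ.card + 1), c σ

/-- `c` is a `p`-chain of the complex `L` (a `p`-simplex has `p+1` vertices). -/
def IsChainOf (L : Finset (Finset V)) (p : ℕ) (c : Finset V → ZMod 2) : Prop :=
  ∀ σ, c σ ≠ 0 → σ ∈ L ∧ σ.card = p + 1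

/-- `c` is a `p`-cycle of `L`. -/
def IsCycleOf (L : Finset (Finset V)) (p : ℕ) (c : Finset V → ZMod 2) : Prop :=
  IsChainOf L p c ∧ bdry c = 0

/-- `c` is a `p`-boundary of `L`. -/
def IsBoundaryOf (L : Finset (Finset V)) (p : ℕ) (c : Finset V → ZMod 2) : Prop :=
  ∃ Γ, IsChainOf L (p + 1) Γ ∧ bdry Γ = c

/-- The chain map `ξ_#`: a simplex `σ` is sent to `ξ(σ)` if the dimension is preserved,
and to `0` otherwise, extended linearly. -/
def xiChain (u v : V) (c : Finset V → ZMod 2) : Finset V → ZMod 2 := fun σ' =>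
  ∑ σ ∈ univ.filter (fun σ : Finset V => xi u v σ = σ' ∧ σ.card = σ'.card), c σ

/-- The mirror `m(σ)` of a simplex: exchange `u` and `v`. -/
def mir (u v : V) (σ : Finset V) : Finset V := σ.image (Equiv.swap u v)

/-- A simplex is vanishing if it contains both `u` and `v`. -/
def Vanishing (K : Finset (Finset V)) (u v : V) (σ : Finset V) : Prop :=
  σ ∈ K ∧ u ∈ σ ∧ v ∈ σ

/-- A simplex is mirrored if it contains exactly one of `u, v` and `σ ∪ {u,v} ∈ K`. -/
def Mirrored (K : Finset (Finset V)) (u v : V) (σ : Finset V) : Prop :=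
  σ ∈ K ∧ ((u ∈ σ ∧ v ∉ σ) ∨ (v ∈ σ ∧ u ∉ σ)) ∧ σ ∪ {u, v} ∈ K

/-- A simplex is local if it is vanishing or mirrored. -/
def IsLocal (K : Finset (Finset V)) (u v : V) (σ : Finset V) : Prop :=
  Vanishing K u v σ ∨ Mirrored K u v σ

/-- `prec` is a linear order on `K` refining the height function, with ties broken by
dimension (lower dimensional simplices first). -/
def PrecOK (K : Finset (Finset V)) (h : Finset V → ℝ)
    (prec : Finset V → Finset V → Prop) : Prop :=
  (∀ σ, ¬ prec σ σ) ∧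
  (∀ σ τ ρ, prec σ τ → prec τ ρ → prec σ ρ) ∧
  (∀ σ ∈ K, ∀ τ ∈ K, σ ≠ τ → prec σ τ ∨ prec τ σ) ∧
  (∀ σ ∈ K, ∀ τ ∈ K, h σ < h τ → prec σ τ) ∧
  (∀ σ ∈ K, ∀ τ ∈ K, h σ = h τ → σ.card < τ.card → prec σ τ)

/-- The `≺`-later of a mirrored simplex `σ` and its mirror `m(σ)`. -/
def later (prec : Finset V → Finset V → Prop) (u v : V) (σ : Finset V) : Finset V :=
  if prec σ (mir u v σ) then mir u v σ else σ

/-- The edge `{u,v}` is `(p,ε)`-admissible: for every mirrored `p`-simplex (and, when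
`p > 0`, every mirrored `(p-1)`-simplex) `σ`, the heights of the `≺`-later of the
mirrored pair `σ, m(σ)` and of their shared vanishing cofacet `σ ∪ {u,v}` differ by
at most `ε`. -/
def PAdmissible (K : Finset (Finset V)) (h : Finset V → ℝ) (u v : V)
    (prec : Finset V → Finset V → Prop) (p : ℕ) (ε : ℝ) : Prop :=
  (∀ σ, Mirrored K u v σ → σ.card = p + 1 →
    |h (later prec u v σ) - h (σ ∪ {u, v})| ≤ ε) ∧
  (0 < p → ∀ σ, Mirrored K u v σ → σ.card = p →
    |h (later prec u v σ) - h (σ ∪ {u, v})| ≤ ε)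

/-- The value of the chain map `ψ` on a single simplex `σ'` of the contracted complex:
(i) if `σ'` is the image of a mirrored pair `τ ≺ m(τ)`, then `ψ(σ') = τ + Σ ρ`, summed
over the vanishing simplices `ρ` of the same dimension sharing with `τ` a common
mirrored facet `η` with `m(η) ≺ η`;
(ii) otherwise, if the unique preimage `σ₀` of `σ'` has a mirrored facet `η` with
`m(η) ≺ η`, then `ψ(σ') = σ₀ + Σ (η ∪ {u,v})` over all such facets;
(iii) otherwise `ψ(σ') = σ'`. -/
def psiSimp (K : Finset (Finset V)) (u v : V) (prec : Finset V → Finset V → Prop)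
    (σ' : Finset V) : Finset V → ZMod 2 :=
  if u ∈ σ' ∧ v ∉ σ' ∧ Mirrored K u v σ' then
    let τ : Finset V := if prec σ' (mir u v σ') then σ' else mir u v σ'
    fun ρ =>
      (if ρ = τ then 1 else 0) +
      (if ρ ∈ K ∧ u ∈ ρ ∧ v ∈ ρ ∧ ρ.card = σ'.card ∧
          (∃ η : Finset V, η ⊆ τ ∧ η ⊆ ρ ∧ η.card + 1 = τ.card ∧
            Mirrored K u v η ∧ prec (mir u v η) η) then 1 else 0)
  else
    let σ₀ : Finset V := if σ' ∈ K then σ' else mir u v σ'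
    if ∃ η : Finset V, η ⊆ σ₀ ∧ η.card + 1 = σ₀.card ∧ Mirrored K u v η ∧
        prec (mir u v η) η then
      fun ρ =>
        (if ρ = σ₀ then 1 else 0) +
        ∑ η ∈ σ₀.powerset.filter (fun η => η.card + 1 = σ₀.card ∧ Mirrored K u v η ∧
            prec (mir u v η) η ∧ η ∪ {u, v} = ρ), (1 : ZMod 2)
    else fun ρ => if ρ = σ' then 1 else 0

/-- The chain map `ψ`, the linear extension of `psiSimp`. -/
def psiChain (K : Finset (Finset V)) (u v : V) (prec : Finset V → Finset V → Prop)
    (c : Finset V → ZMod 2) : Finset V → ZMod 2 :=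
  fun ρ => ∑ σ' ∈ (univ : Finset (Finset V)), c σ' * psiSimp K u v prec σ' ρ


omit [Fintype V] in
lemma xi_of_not_mem (u v : V) {ρ : Finset V} (hv : v ∉ ρ) : xi u v ρ = ρ := by
  ext y
  simp only [xi, cmap, Finset.mem_image]
  constructor
  · rintro ⟨x, hx, rfl⟩
    have hxv : x ≠ v := by rintro rfl; exact hv hx
    rwa [if_neg hxv]
  · intro hy
    have hyv : y ≠ v := by rintro rfl; exact hv hy
    exact ⟨y, hy, if_neg hyv⟩

omit [Fintype V] in
lemma mir_card (u v : V) (σ : Finset V) : (mir u v σ).card = σ.card :=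
  Finset.card_image_of_injective _ (Equiv.injective _)

omit [Fintype V] in
lemma xi_mir (u v : V) (hne : u ≠ v) {σ : Finset V} (hv : v ∉ σ) :
    xi u v (mir u v σ) = σ := by
  unfold xi mir
  rw [Finset.image_image]
  ext y
  simp only [Finset.mem_image, Function.comp, cmap]
  constructor
  · rintro ⟨x, hx, rfl⟩
    by_cases hxu : x = u
    · subst hxu
      rw [Equiv.swap_apply_left, if_pos rfl]
      exact hx
    · have hxv : x ≠ v := by rintro rfl; exact hv hx
      rw [Equiv.swap_apply_of_ne_of_ne hxu hxv, if_neg hxv]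
      exact hx
  · intro hy
    refine ⟨y, hy, ?_⟩
    by_cases hyu : y = u
    · subst hyu
      rw [Equiv.swap_apply_left, if_pos rfl]
    · have hyv : y ≠ v := by rintro rfl; exact hv hy
      rw [Equiv.swap_apply_of_ne_of_ne hyu hyv, if_neg hyv]

omit [Fintype V] in
lemma card_xi_lt (u v : V) (hne : u ≠ v) {ρ : Finset V} (hu : u ∈ ρ) (hv : v ∈ ρ) :
    (xi u v ρ).card < ρ.card := by
  have hsub : xi u v ρ ⊆ ρ.erase v := by
    intro y hy
    simp only [xi, cmap, Finset.mem_image] at hy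
    obtain ⟨x, hx, rfl⟩ := hy
    by_cases hxv : x = v
    · rw [if_pos hxv]
      exact Finset.mem_erase.2 ⟨hne, hu⟩
    · rw [if_neg hxv]
      exact Finset.mem_erase.2 ⟨hxv, hx⟩
  calc (xi u v ρ).card ≤ (ρ.erase v).card := Finset.card_le_card hsub
    _ < ρ.card := Finset.card_erase_lt_of_mem hv

/-- if `{u,v}` satisfies the link condition and is `(p,ε)`-admissible, then
for every `p`-chain `c` of `K'_a = ξ(K_a)` we have `ξ_#(ψ(c)) = c` (as `p`-chains of
`K'_b`, `b = a + ε`); i.e. the composite `ξ_# ∘ ψ` is the inclusion of chains of `K'_a`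
into chains of `K'_b`. -/
theorem xiChain_psiChain_eq_inclusion
    (K : Finset (Finset V)) (h : Finset V → ℝ) (u v : V)
    (prec : Finset V → Finset V → Prop) (p : ℕ) (ε a b : ℝ)
    (hK : IsComplex K) (hh : IsHeight K h)
    (huv : ({u, v} : Finset V) ∈ K) (hne : u ≠ v)
    (hprec : PrecOK K h prec) (huvprec : prec {u} {v})
    (hlink : LinkCond K u v) (hε : 0 < ε)
    (hadm : PAdmissible K h u v prec p ε) (hb : b = a + ε)
    (c : Finset V → ZMod 2)
    (hc : IsChainOf (contract u v (sublevel K h a)) p c) :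
    xiChain u v (psiChain K u v prec c) = c := by
  funext ρ'
  simp only [xiChain, psiChain]
  rw [Finset.sum_comm]
  have FnoUV : ∀ σ : Finset V, xi u v σ = ρ' ∧ σ.card = ρ'.card → ¬ (u ∈ σ ∧ v ∈ σ) := by
    rintro σ ⟨hx, hcard⟩ ⟨hu, hv⟩
    have := card_xi_lt u v hne hu hv
    rw [hx, hcard] at this
    exact lt_irrefl _ this
  have key : ∀ σ', c σ' ≠ 0 →
      (∑ σ ∈ univ.filter (fun σ : Finset V => xi u v σ = ρ' ∧ σ.card = ρ'.card),
        psiSimp K u v prec σ' σ) = if ρ' = σ' then 1 else 0 := by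
    intro σ' h0
    obtain ⟨hσ'mem, hcardσ'⟩ := hc σ' h0
    have hvσ' : v ∉ σ' := by
      intro hv
      simp only [contract, Finset.mem_image] at hσ'mem
      obtain ⟨α, _, rfl⟩ := hσ'mem
      simp only [xi, cmap, Finset.mem_image] at hv
      obtain ⟨x, hx, hxe⟩ := hv
      by_cases hxv : x = v
      · rw [if_pos hxv] at hxe; exact hne hxe
      · rw [if_neg hxv] at hxe; exact hxv hxe
    have fin : ∀ w : Finset V, xi u v w = σ' → w.card = σ'.card →
        (∑ σ ∈ univ.filter (fun σ : Finset V => xi u v σ = ρ' ∧ σ.card = ρ'.card),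
          (if σ = w then (1 : ZMod 2) else 0)) = if ρ' = σ' then 1 else 0 := by
      intro w hxw hcw
      rw [Finset.sum_ite_eq' _ w (fun _ => (1 : ZMod 2))]
      have hiff : w ∈ univ.filter (fun σ : Finset V => xi u v σ = ρ' ∧ σ.card = ρ'.card)
          ↔ ρ' = σ' := by
        simp only [Finset.mem_filter, Finset.mem_univ, true_and, hxw, hcw]
        constructor
        · rintro ⟨h1, _⟩; exact h1.symm
        · rintro rfl; exact ⟨rfl, rfl⟩
      rw [if_congr hiff rfl rfl]
    by_cases hcond : u ∈ σ' ∧ v ∉ σ' ∧ Mirrored K u v σ'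
    · have hpsi : ∀ σ ∈ univ.filter (fun σ : Finset V => xi u v σ = ρ' ∧ σ.card = ρ'.card),
          psiSimp K u v prec σ' σ =
            if σ = (if prec σ' (mir u v σ') then σ' else mir u v σ') then 1 else 0 := by
        intro σ hσ
        rw [Finset.mem_filter] at hσ
        have hno := FnoUV σ hσ.2
        have hbig : ¬(σ ∈ K ∧ u ∈ σ ∧ v ∈ σ ∧ σ.card = σ'.card ∧
            (∃ η : Finset V, η ⊆ (if prec σ' (mir u v σ') then σ' else mir u v σ') ∧ η ⊆ σ ∧
              η.card + 1 = (if prec σ' (mir u v σ') then σ' else mir u v σ').card ∧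
              Mirrored K u v η ∧ prec (mir u v η) η)) :=
          fun hmem => hno ⟨hmem.2.1, hmem.2.2.1⟩
        simp only [psiSimp, if_pos hcond]
        rw [if_neg hbig, add_zero]
      rw [Finset.sum_congr rfl hpsi]
      by_cases hp : prec σ' (mir u v σ')
      · rw [if_pos hp]
        exact fin σ' (xi_of_not_mem u v hvσ') rfl
      · rw [if_neg hp]
        exact fin (mir u v σ') (xi_mir u v hne hvσ') (mir_card u v σ')
    · by_cases hex : ∃ η : Finset V,
          η ⊆ (if σ' ∈ K then σ' else mir u v σ') ∧
          η.card + 1 = (if σ' ∈ K then σ' else mir u v σ').card ∧ Mirrored K u v η ∧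
          prec (mir u v η) η
      · have hpsi : ∀ σ ∈ univ.filter (fun σ : Finset V => xi u v σ = ρ' ∧ σ.card = ρ'.card),
            psiSimp K u v prec σ' σ =
              if σ = (if σ' ∈ K then σ' else mir u v σ') then 1 else 0 := by
          intro σ hσ
          rw [Finset.mem_filter] at hσ
          have hno := FnoUV σ hσ.2
          have hempty : ((if σ' ∈ K then σ' else mir u v σ').powerset.filter
              (fun η => η.card + 1 = (if σ' ∈ K then σ' else mir u v σ').card ∧
                Mirrored K u v η ∧ prec (mir u v η) η ∧ η ∪ {u, v} = σ)) = ∅ := by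
            rw [Finset.filter_eq_empty_iff]
            rintro η _ ⟨_, _, _, hun⟩
            refine hno ⟨?_, ?_⟩
            · rw [← hun]
              exact Finset.mem_union_right _ (Finset.mem_insert_self u {v})
            · rw [← hun]
              exact Finset.mem_union_right _
                (Finset.mem_insert_of_mem (Finset.mem_singleton_self v))
          simp only [psiSimp, if_neg hcond, if_pos hex]
          rw [hempty, Finset.sum_empty, add_zero]
        rw [Finset.sum_congr rfl hpsi]
        by_cases hk : σ' ∈ K
        · rw [if_pos hk]
          exact fin σ' (xi_of_not_mem u v hvσ') rfl
        · rw [if_neg hk]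
          exact fin (mir u v σ') (xi_mir u v hne hvσ') (mir_card u v σ')
      · have hpsi : ∀ σ ∈ univ.filter (fun σ : Finset V => xi u v σ = ρ' ∧ σ.card = ρ'.card),
            psiSimp K u v prec σ' σ = if σ = σ' then 1 else 0 := by
          intro σ _
          simp only [psiSimp, if_neg hcond, if_neg hex]
        rw [Finset.sum_congr rfl hpsi]
        exact fin σ' (xi_of_not_mem u v hvσ') rfl
  have step : ∀ σ' ∈ (univ : Finset (Finset V)),
      (∑ σ ∈ univ.filter (fun σ : Finset V => xi u v σ = ρ' ∧ σ.card = ρ'.card),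
        c σ' * psiSimp K u v prec σ' σ) = c σ' * (if ρ' = σ' then 1 else 0) := by
    intro σ' _
    rw [← Finset.mul_sum]
    by_cases h0 : c σ' = 0
    · rw [h0, zero_mul, zero_mul]
    · rw [key σ' h0]
  rw [Finset.sum_congr rfl step]
  simp [Finset.sum_ite_eq]
end
end

section
/- Suppose the edge {u,v} is admissible. If e ∈ K is an edge with e ∉ {{u,v}, e₁′, e₂′} and e is paired with a vertex r in K, then ξ(e) is paired with ξ(r) in the contracted complex K' (with respect to the induced order and induced height). -/
set_option linter.unusedSectionVars false
set_option maxHeartbeats 1000000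


open Classical Finset

noncomputable section

variable {V : Type*} [Fintype V] [DecidableEq V]

/-- `K` is a `2`-dimensional complex in which every simplex is the face of a triangle and
every edge is contained in exactly two triangles (the combinatorial consequences of the
underlying space being a closed `2`-manifold). -/
def ClosedTwoManifold (K : Finset (Finset V)) : Prop :=
  (∀ σ ∈ K, σ.card ≤ 3) ∧
  (∀ σ ∈ K, ∃ t ∈ K, t.card = 3 ∧ σ ⊆ t) ∧
  (∀ e ∈ K, e.card = 2 → ∃ s ∈ K, ∃ t ∈ K, s ≠ t ∧ s.card = 3 ∧ t.card = 3 ∧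
    e ⊆ s ∧ e ⊆ t ∧ ∀ r ∈ K, r.card = 3 → e ⊆ r → r = s ∨ r = t)

/-- The graph `G_{≺e}` on the vertices of `K` whose edges are the edges of `K` strictly
preceding `e` under `≺`. -/
def vertGraph (K : Finset (Finset V)) (prec : Finset V → Finset V → Prop)
    (e : Finset V) : SimpleGraph V where
  Adj x y := x ≠ y ∧ ({x, y} : Finset V) ∈ K ∧ prec {x, y} e
  symm := by
    constructor
    rintro x y ⟨hxy, hK, hp⟩
    exact ⟨hxy.symm, by rwa [Finset.pair_comm], by rwa [Finset.pair_comm]⟩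
  loopless := by constructor; rintro x ⟨hx, -⟩; exact hx rfl

/-- The graph `G^{≻e}` on the triangles of `K`, two triangles being adjacent if they share
an edge strictly succeeding `e` under `≺`. -/
def triGraph (K : Finset (Finset V)) (prec : Finset V → Finset V → Prop)
    (e : Finset V) : SimpleGraph (Finset V) where
  Adj s t := s ≠ t ∧ s ∈ K ∧ t ∈ K ∧ s.card = 3 ∧ t.card = 3 ∧
    ∃ d : Finset V, d ∈ K ∧ d.card = 2 ∧ d ⊆ s ∧ d ⊆ t ∧ prec e d
  symm := by
    constructor
    rintro s t ⟨h1, h2, h3, h4, h5, d, hd1, hd2, hd3, hd4, hd5⟩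
    exact ⟨h1.symm, h3, h2, h5, h4, d, hd1, hd2, hd4, hd3, hd5⟩
  loopless := by constructor; rintro s ⟨hs, -⟩; exact hs rfl

/-- `w` is the `≺`-least vertex of the connected component of `x`. -/
def LeastVert (G : SimpleGraph V) (prec : Finset V → Finset V → Prop) (x w : V) : Prop :=
  G.Reachable x w ∧ ∀ w', G.Reachable x w' → w = w' ∨ prec {w} {w'}

/-- `w` is the `≺`-greatest triangle of the connected component of `s`. -/
def GreatestTri (G : SimpleGraph (Finset V)) (prec : Finset V → Finset V → Prop)
    (s w : Finset V) : Prop :=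
  G.Reachable s w ∧ ∀ w', G.Reachable s w' → w = w' ∨ prec w' w

/-- The edge `e = {x,y}` is paired with the vertex `w`: the endpoints `x` and `y` lie in
distinct connected components of `G_{≺e}` and `w` is the `≺`-greater of the two `≺`-least
vertices of those components. -/
def PairedVE (K : Finset (Finset V)) (prec : Finset V → Finset V → Prop)
    (w : V) (e : Finset V) : Prop :=
  ∃ x y wx wy, e = {x, y} ∧ x ≠ y ∧ e ∈ K ∧
    ¬ (vertGraph K prec e).Reachable x y ∧
    LeastVert (vertGraph K prec e) prec x wx ∧
    LeastVert (vertGraph K prec e) prec y wy ∧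
    ((prec {wx} {wy} ∧ w = wy) ∨ (prec {wy} {wx} ∧ w = wx))

/-- The edge `e`, contained in the two triangles `s` and `t`, is paired with the triangle
`w`: `s` and `t` lie in distinct connected components of `G^{≻e}` and `w` is the
`≺`-smaller of the two `≺`-greatest triangles of those components. -/
def PairedET (K : Finset (Finset V)) (prec : Finset V → Finset V → Prop)
    (e w : Finset V) : Prop :=
  ∃ s t ws wt : Finset V, s ≠ t ∧ s ∈ K ∧ t ∈ K ∧ s.card = 3 ∧ t.card = 3 ∧
    e ⊆ s ∧ e ⊆ t ∧ e ∈ K ∧ e.card = 2 ∧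
    ¬ (triGraph K prec e).Reachable s t ∧
    GreatestTri (triGraph K prec e) prec s ws ∧
    GreatestTri (triGraph K prec e) prec t wt ∧
    ((prec ws wt ∧ w = ws) ∨ (prec wt ws ∧ w = wt))

/-- `σ` is the `≺`-least `ξ`-preimage in `K` of `σ'`. -/
def MinPre (K : Finset (Finset V)) (u v : V) (prec : Finset V → Finset V → Prop)
    (σ' σ : Finset V) : Prop :=
  σ ∈ K ∧ xi u v σ = σ' ∧ ∀ ρ ∈ K, xi u v ρ = σ' → ρ = σ ∨ prec σ ρ

/-- The order induced on the contracted complex `K'`: `σ' ≺ τ'` iff the `≺`-least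
`ξ`-preimage of `σ'` precedes that of `τ'`. -/
def precInd (K : Finset (Finset V)) (u v : V) (prec : Finset V → Finset V → Prop)
    (σ' τ' : Finset V) : Prop :=
  ∃ σ τ : Finset V, MinPre K u v prec σ' σ ∧ MinPre K u v prec τ' τ ∧ prec σ τ


/-! ### Auxiliary lemmas -/

section Aux

variable {K : Finset (Finset V)} {h : Finset V → ℝ} {prec : Finset V → Finset V → Prop}
variable {u v : V}

lemma prec_asymm (hprec : PrecOK K h prec) {a b : Finset V} (hab : prec a b) :
    ¬ prec b a := fun hba => hprec.1 a (hprec.2.1 a b a hab hba)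

lemma mem_of_sub (hK : IsComplex K) {σ τ : Finset V} (hσ : σ ∈ K) (hsub : τ ⊆ σ)
    (hτ : τ.Nonempty) : τ ∈ K := hK.2 σ hσ τ hsub hτ

lemma prec_of_card (hh : IsHeight K h) (hprec : PrecOK K h prec) {σ τ : Finset V}
    (hσ : σ ∈ K) (hτ : τ ∈ K) (hsub : σ ⊆ τ) (hc : σ.card < τ.card) : prec σ τ := by
  rcases lt_or_eq_of_le (hh σ hσ τ hτ hsub) with hlt | heq
  · exact hprec.2.2.2.1 σ hσ τ hτ hlt
  · exact hprec.2.2.2.2 σ hσ τ hτ heq hc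

lemma cmap_v (u v : V) : cmap u v v = u := by simp [cmap]

lemma cmap_of_ne {z : V} (hz : z ≠ v) : cmap u v z = z := by simp [cmap, hz]

lemma cmap_ne_v (hne : u ≠ v) (z : V) : cmap u v z ≠ v := by
  by_cases hz : z = v <;> simp [cmap, hz, hne, Ne.symm]

lemma cmap_eq_cases (hne : u ≠ v) {p q : V} (hpq : p ≠ q) (hc : cmap u v p = cmap u v q) :
    (p = u ∧ q = v) ∨ (p = v ∧ q = u) := by
  by_cases hp : p = v
  · by_cases hq : q = v
    · exact absurd (hp.trans hq.symm) hpq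
    · rw [hp, cmap_v, cmap_of_ne hq] at hc
      exact Or.inr ⟨hp, hc.symm⟩
  · by_cases hq : q = v
    · rw [hq, cmap_of_ne hp, cmap_v] at hc
      exact Or.inl ⟨hc, hq⟩
    · rw [cmap_of_ne hp, cmap_of_ne hq] at hc
      exact absurd hc hpq

lemma xi_pair (u v p q : V) : xi u v {p, q} = {cmap u v p, cmap u v q} := by
  simp [xi, Finset.image_insert, Finset.image_singleton]

lemma xi_singleton (u v p : V) : xi u v {p} = {cmap u v p} := by
  simp [xi]

lemma xi_of_fixed {σ : Finset V} (hv : v ∉ σ) : xi u v σ = σ := by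
  rw [xi, Finset.image_congr (g := id), Finset.image_id]
  intro z hz
  exact cmap_of_ne (fun hzv => hv (hzv ▸ hz))

lemma pair_eq_pair_cases {a b c d : V} (hne : a ≠ b)
    (heq : ({a, b} : Finset V) = {c, d}) : (c = a ∧ d = b) ∨ (c = b ∧ d = a) := by
  have h1 : c ∈ ({a, b} : Finset V) := heq.symm ▸ Finset.mem_insert_self c {d}
  have h2 : d ∈ ({a, b} : Finset V) :=
    heq.symm ▸ Finset.mem_insert_of_mem (Finset.mem_singleton_self d)
  have h3 : a ∈ ({c, d} : Finset V) := heq ▸ Finset.mem_insert_self a {b}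
  have h4 : b ∈ ({c, d} : Finset V) :=
    heq ▸ Finset.mem_insert_of_mem (Finset.mem_singleton_self b)
  simp only [Finset.mem_insert, Finset.mem_singleton] at h1 h2 h3 h4
  rcases h1 with rfl | rfl <;> rcases h2 with rfl | rfl <;> tauto

lemma exists_pair_of_mem {e : Finset V} {c : V} (hc : c ∈ e) (hcard : e.card = 2) :
    ∃ z, z ≠ c ∧ e = {c, z} := by
  obtain ⟨z, hz⟩ : ∃ z, e.erase c = {z} := Finset.card_eq_one.1 (by
    rw [Finset.card_erase_of_mem hc, hcard])
  refine ⟨z, (Finset.mem_erase.1 (hz ▸ Finset.mem_singleton_self z)).1, ?_⟩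
  rw [← Finset.insert_erase hc, hz]

lemma pair_subset_triple {d : Finset V} {a : V} (hsub : d ⊆ insert a {u, v})
    (hcard : d.card = 2) (hduv : d ≠ {u, v}) (hne : u ≠ v) (hau : a ≠ u) (hav : a ≠ v) :
    d = {a, u} ∨ d = {a, v} := by
  have ha : a ∈ d := by
    by_contra ha
    have hsub2 : d ⊆ {u, v} := by
      intro z hz
      rcases Finset.mem_insert.1 (hsub hz) with rfl | hz2
      · exact absurd hz ha
      · exact hz2
    exact hduv (Finset.eq_of_subset_of_card_le hsub2 (by
      rw [hcard, Finset.card_pair hne]))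
  obtain ⟨z, hza, hdz⟩ := exists_pair_of_mem ha hcard
  have hz : z ∈ insert a ({u, v} : Finset V) := hsub (hdz ▸ by simp)
  rcases Finset.mem_insert.1 hz with rfl | hz2
  · exact absurd rfl hza
  · rcases Finset.mem_insert.1 hz2 with rfl | hz3
    · exact Or.inl hdz
    · exact Or.inr (by rw [hdz, Finset.mem_singleton.1 hz3])

/-- a generic finite minimum lemma -/
lemma exists_min_fin (hprec : PrecOK K h prec) :
    ∀ S : Finset (Finset V), S ⊆ K → S.Nonempty →
      ∃ m ∈ S, ∀ z ∈ S, z = m ∨ prec m z := by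
  intro S
  induction S using Finset.induction_on with
  | empty => intro _ hne; simp at hne
  | @insert a s ha ih =>
    intro hsub hne
    have haK : a ∈ K := hsub (Finset.mem_insert_self a s)
    by_cases hs : s.Nonempty
    · obtain ⟨m, hm, hmin⟩ := ih (fun z hz => hsub (Finset.mem_insert_of_mem hz)) hs
      have hmK : m ∈ K := hsub (Finset.mem_insert_of_mem hm)
      by_cases hma : a = m
      · refine ⟨m, Finset.mem_insert_of_mem hm, fun z hz => ?_⟩
        rcases Finset.mem_insert.1 hz with rfl | hz2
        · exact Or.inl hma
        · exact hmin z hz2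
      · rcases hprec.2.2.1 a haK m hmK hma with hlt | hgt
        · refine ⟨a, Finset.mem_insert_self a s, fun z hz => ?_⟩
          rcases Finset.mem_insert.1 hz with rfl | hz2
          · exact Or.inl rfl
          · rcases hmin z hz2 with rfl | hp
            · exact Or.inr hlt
            · exact Or.inr (hprec.2.1 _ _ _ hlt hp)
        · refine ⟨m, Finset.mem_insert_of_mem hm, fun z hz => ?_⟩
          rcases Finset.mem_insert.1 hz with rfl | hz2
          · exact Or.inr hgt
          · exact hmin z hz2
    · refine ⟨a, Finset.mem_insert_self a s, fun z hz => ?_⟩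
      rcases Finset.mem_insert.1 hz with rfl | hz2
      · exact Or.inl rfl
      · exact absurd ⟨z, hz2⟩ hs

lemma minpre_exists (hprec : PrecOK K h prec) {s : Finset V}
    (hs : s ∈ K.image (xi u v)) : ∃ σ, MinPre K u v prec s σ := by
  classical
  obtain ⟨ρ₀, hρ₀, hxiρ₀⟩ := Finset.mem_image.1 hs
  obtain ⟨m, hm, hmin⟩ := exists_min_fin hprec (K.filter (fun ρ => xi u v ρ = s))
    (Finset.filter_subset _ _) ⟨ρ₀, Finset.mem_filter.2 ⟨hρ₀, hxiρ₀⟩⟩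
  obtain ⟨hmK, hmx⟩ := Finset.mem_filter.1 hm
  exact ⟨m, hmK, hmx, fun ρ hρ hx => hmin ρ (Finset.mem_filter.2 ⟨hρ, hx⟩)⟩

lemma minpre_unique (hprec : PrecOK K h prec) {s σ τ : Finset V}
    (h1 : MinPre K u v prec s σ) (h2 : MinPre K u v prec s τ) : σ = τ := by
  rcases h1.2.2 τ h2.1 h2.2.1 with heq | hp1
  · exact heq.symm
  · rcases h2.2.2 σ h1.1 h1.2.1 with heq | hp2
    · exact heq
    · exact absurd hp2 (prec_asymm hprec hp1)

lemma precInd_intro {σ' τ' σ τ : Finset V} (h1 : MinPre K u v prec σ' σ)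
    (h2 : MinPre K u v prec τ' τ) (hp : prec σ τ) : precInd K u v prec σ' τ' :=
  ⟨σ, τ, h1, h2, hp⟩

lemma precInd_elim (hprec : PrecOK K h prec) {σ' τ' σ τ : Finset V}
    (h1 : MinPre K u v prec σ' σ) (h2 : MinPre K u v prec τ' τ)
    (hp : precInd K u v prec σ' τ') : prec σ τ := by
  obtain ⟨σ₀, τ₀, h10, h20, hp0⟩ := hp
  rwa [minpre_unique hprec h1 h10, minpre_unique hprec h2 h20]

end Aux


section Aux2

variable {K : Finset (Finset V)} {h : Finset V → ℝ} {prec : Finset V → Finset V → Prop}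
variable {u v : V}

lemma minpre_u (hK : IsComplex K) (hh : IsHeight K h) (hprec : PrecOK K h prec)
    (huv : ({u, v} : Finset V) ∈ K) (hne : u ≠ v) (huvprec : prec {u} {v}) :
    MinPre K u v prec {u} {u} := by
  have huK : ({u} : Finset V) ∈ K :=
    mem_of_sub hK huv (Finset.singleton_subset_iff.2 (by simp)) ⟨u, by simp⟩
  refine ⟨huK, by rw [xi_singleton, cmap_of_ne hne], ?_⟩
  intro ρ hρ hx
  have hρsub : ρ ⊆ {u, v} := by
    intro z hz
    have hcz : cmap u v z ∈ ({u} : Finset V) := hx ▸ Finset.mem_image_of_mem _ hz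
    simp only [Finset.mem_singleton] at hcz
    by_cases hzv : z = v
    · simp [hzv]
    · rw [cmap_of_ne hzv] at hcz; simp [hcz]
  by_cases hvρ : v ∈ ρ
  · by_cases huρ : u ∈ ρ
    · have : ρ = {u, v} := Finset.Subset.antisymm hρsub (by
        intro z hz
        rcases Finset.mem_insert.1 hz with rfl | hz
        · exact huρ
        · exact (Finset.mem_singleton.1 hz) ▸ hvρ)
      right
      rw [this]
      exact prec_of_card hh hprec huK huv (Finset.singleton_subset_iff.2 (by simp))
        (by rw [Finset.card_singleton, Finset.card_pair hne]; norm_num)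
    · have hρv : ρ ⊆ ({v} : Finset V) := by
        intro z hz
        rcases Finset.mem_insert.1 (hρsub hz) with rfl | hz2
        · exact absurd hz huρ
        · exact hz2
      have : ρ = {v} := by
        rcases Finset.subset_singleton_iff.1 hρv with h0 | h0
        · exact absurd (h0 ▸ hvρ) (Finset.notMem_empty v)
        · exact h0
      right; rw [this]; exact huvprec
  · left
    have hρu : ρ ⊆ ({u} : Finset V) := by
      intro z hz
      rcases Finset.mem_insert.1 (hρsub hz) with rfl | hz2
      · simp
      · exact absurd ((Finset.mem_singleton.1 hz2) ▸ hz) hvρ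
    rcases Finset.subset_singleton_iff.1 hρu with h0 | h0
    · exact absurd h0 (by intro hc; exact (hK.1 ρ hρ).ne_empty hc)
    · exact h0

lemma minpre_singleton (hK : IsComplex K) {w : V} (hw : ({w} : Finset V) ∈ K)
    (hwu : w ≠ u) (hwv : w ≠ v) : MinPre K u v prec {w} {w} := by
  refine ⟨hw, by rw [xi_singleton, cmap_of_ne hwv], ?_⟩
  intro ρ hρ hx
  left
  have hρsub : ρ ⊆ {w} := by
    intro z hz
    have hcz : cmap u v z ∈ ({w} : Finset V) := hx ▸ Finset.mem_image_of_mem _ hz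
    simp only [Finset.mem_singleton] at hcz
    by_cases hzv : z = v
    · rw [hzv, cmap_v] at hcz; exact absurd hcz.symm hwu
    · rw [cmap_of_ne hzv] at hcz; simp [hcz]
  rcases Finset.subset_singleton_iff.1 hρsub with h0 | h0
  · exact absurd h0 (by intro hc; exact (hK.1 ρ hρ).ne_empty hc)
  · exact h0

lemma minpre_single (hK : IsComplex K) (hh : IsHeight K h) (hprec : PrecOK K h prec)
    (huv : ({u, v} : Finset V) ∈ K) (hne : u ≠ v) (huvprec : prec {u} {v}) {w : V}
    (hw : ({w} : Finset V) ∈ K) (hwv : w ≠ v) : MinPre K u v prec {w} {w} := by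
  by_cases hwu : w = u
  · subst hwu; exact minpre_u hK hh hprec huv hne huvprec
  · exact minpre_singleton hK hw hwu hwv

lemma edge_ident {e₁ e₁' e ρ : Finset V} {z u v : V} (hzu : z ≠ u) (hzv : z ≠ v)
    (hne : u ≠ v)
    (hA : e₁ = {z, u} ∨ e₁ = {z, v}) (hB : e₁' = {z, u} ∨ e₁' = {z, v}) (h11 : e₁ ≠ e₁')
    (hC : e = {z, u} ∨ e = {z, v}) (hD : ρ = {z, u} ∨ ρ = {z, v}) (heρ : e ≠ ρ)
    (hee1 : e ≠ e₁') : e = e₁ ∧ ρ = e₁' := by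
  have hzz : ({z, u} : Finset V) ≠ {z, v} := by
    intro hq
    have : u ∈ ({z, v} : Finset V) := hq ▸ (by simp)
    simp only [Finset.mem_insert, Finset.mem_singleton] at this
    rcases this with h0 | h0
    · exact hzu h0.symm
    · exact hne h0
  rcases hA with rfl | rfl <;> rcases hB with rfl | rfl <;> rcases hC with rfl | rfl <;>
    rcases hD with rfl | rfl <;>
    first
      | exact ⟨rfl, rfl⟩
      | exact absurd rfl h11
      | exact absurd rfl heρ
      | exact absurd rfl hee1

lemma minpre_self
    (hK : IsComplex K) (hh : IsHeight K h) (hprec : PrecOK K h prec) (hne : u ≠ v)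
    {t₁ t₂ e₁ e₁' e₂ e₂' : Finset V}
    (honly : ∀ t ∈ K, t.card = 3 → ({u, v} : Finset V) ⊆ t → t = t₁ ∨ t = t₂)
    (he1 : e₁ ⊆ t₁) (he1c : e₁.card = 2) (he1uv : e₁ ≠ {u, v})
    (he1' : e₁' ⊆ t₁) (he1'c : e₁'.card = 2) (he1'uv : e₁' ≠ {u, v})
    (he11' : e₁ ≠ e₁') (hp1 : prec e₁ e₁')
    (he2 : e₂ ⊆ t₂) (he2c : e₂.card = 2) (he2uv : e₂ ≠ {u, v})
    (he2' : e₂' ⊆ t₂) (he2'c : e₂'.card = 2) (he2'uv : e₂' ≠ {u, v})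
    (he22' : e₂ ≠ e₂') (hp2 : prec e₂ e₂')
    (hlink : LinkCond K u v)
    {e : Finset V} (heK : e ∈ K) (hec : e.card = 2)
    (hee : e ≠ {u, v}) (hee1 : e ≠ e₁') (hee2 : e ≠ e₂') :
    MinPre K u v prec (xi u v e) e := by
  refine ⟨heK, rfl, ?_⟩
  intro ρ hρ hxiρ
  have main : ∀ z : V, z ≠ u → z ≠ v → xi u v e = {u, z} →
      (e = {u, z} ∨ e = {v, z}) → ρ = e ∨ prec e ρ := by
    intro z hzu hzv hxe hecase
    have hsubT : e ⊆ insert z {u, v} := by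
      rcases hecase with rfl | rfl <;> intro w hw <;>
        simp only [Finset.mem_insert, Finset.mem_singleton] at hw ⊢ <;> tauto
    have hzρ : z ∈ ρ := by
      have hz : z ∈ xi u v ρ := by rw [hxiρ, hxe]; simp
      obtain ⟨w, hwρ, hwz⟩ := Finset.mem_image.1 hz
      have hwz' : w = z := by
        by_cases hwv : w = v
        · rw [hwv, cmap_v] at hwz; exact absurd hwz.symm hzu
        · rwa [cmap_of_ne hwv] at hwz
      exact hwz' ▸ hwρ
    have hρT : ρ ⊆ insert z {u, v} := by
      intro w hw
      have hcw : cmap u v w ∈ ({u, z} : Finset V) := by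
        rw [← hxe, ← hxiρ]; exact Finset.mem_image_of_mem _ hw
      simp only [Finset.mem_insert, Finset.mem_singleton] at hcw ⊢
      by_cases hwv : w = v
      · tauto
      · rw [cmap_of_ne hwv] at hcw; tauto
    have huvρ : u ∈ ρ ∨ v ∈ ρ := by
      have hz : u ∈ xi u v ρ := by rw [hxiρ, hxe]; simp
      obtain ⟨w, hwρ, hwu⟩ := Finset.mem_image.1 hz
      by_cases hwv : w = v
      · exact Or.inr (hwv ▸ hwρ)
      · rw [cmap_of_ne hwv] at hwu; exact Or.inl (hwu ▸ hwρ)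
    have endgame : (ρ = {z, u} ∨ ρ = {z, v}) → ρ = e ∨ prec e ρ := by
      intro hρcase
      by_cases hρe : ρ = e
      · exact Or.inl hρe
      have hecase' : e = {z, u} ∨ e = {z, v} := by
        rcases hecase with h0 | h0
        · exact Or.inl (h0.trans (Finset.pair_comm u z))
        · exact Or.inr (h0.trans (Finset.pair_comm v z))
      have hboth : ({z, u} : Finset V) ∈ K ∧ ({z, v} : Finset V) ∈ K := by
        rcases hecase' with h1 | h1 <;> rcases hρcase with h2 | h2
        · exact absurd (h2.trans h1.symm) hρe
        · exact ⟨h1 ▸ heK, h2 ▸ hρ⟩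
        · exact ⟨h2 ▸ hρ, h1 ▸ heK⟩
        · exact absurd (h2.trans h1.symm) hρe
      have hzK : ({z} : Finset V) ∈ K :=
        mem_of_sub hK hboth.1 (Finset.singleton_subset_iff.2 (by simp)) ⟨z, by simp⟩
      have hlku : ({z} : Finset V) ∈ lk K {u} := by
        refine Finset.mem_filter.2 ⟨hzK, Finset.singleton_inter_of_notMem (by simp [hzu]), ?_⟩
        rw [← Finset.insert_eq]
        exact hboth.1
      have hlkv : ({z} : Finset V) ∈ lk K {v} := by
        refine Finset.mem_filter.2 ⟨hzK, Finset.singleton_inter_of_notMem (by simp [hzv]), ?_⟩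
        rw [← Finset.insert_eq]
        exact hboth.2
      have hzlkuv : ({z} : Finset V) ∈ lk K {u, v} := by
        rw [hlink]; exact Finset.mem_inter.2 ⟨hlku, hlkv⟩
      have hTK : insert z ({u, v} : Finset V) ∈ K := by
        have h0 := (Finset.mem_filter.1 hzlkuv).2.2
        rwa [← Finset.insert_eq] at h0
      have hTcard : (insert z ({u, v} : Finset V)).card = 3 := by
        rw [Finset.card_insert_of_notMem (by simp [hzu, hzv]), Finset.card_pair hne]
      have heρ' : e ≠ ρ := fun hq => hρe hq.symm
      rcases honly _ hTK hTcard (Finset.subset_insert _ _) with hT | hT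
      · have hA := pair_subset_triple (hT ▸ he1) he1c he1uv hne hzu hzv
        have hB := pair_subset_triple (hT ▸ he1') he1'c he1'uv hne hzu hzv
        obtain ⟨hEe, hRe⟩ := edge_ident hzu hzv hne hA hB he11' hecase' hρcase heρ' hee1
        right; rw [hEe, hRe]; exact hp1
      · have hA := pair_subset_triple (hT ▸ he2) he2c he2uv hne hzu hzv
        have hB := pair_subset_triple (hT ▸ he2') he2'c he2'uv hne hzu hzv
        obtain ⟨hEe, hRe⟩ := edge_ident hzu hzv hne hA hB he22' hecase' hρcase heρ' hee2
        right; rw [hEe, hRe]; exact hp2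
    by_cases huρ : u ∈ ρ
    · by_cases hvρ : v ∈ ρ
      · -- triangle case
        have hTsub : insert z ({u, v} : Finset V) ⊆ ρ := by
          intro w hw
          simp only [Finset.mem_insert, Finset.mem_singleton] at hw
          rcases hw with rfl | rfl | rfl
          · exact hzρ
          · exact huρ
          · exact hvρ
        right
        apply prec_of_card hh hprec heK hρ (hsubT.trans hTsub)
        rw [hec]
        calc (2 : ℕ) < 3 := by norm_num
          _ = (insert z ({u, v} : Finset V)).card := by
              rw [Finset.card_insert_of_notMem (by simp [hzu, hzv]), Finset.card_pair hne]
          _ ≤ ρ.card := Finset.card_le_card hTsub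
      · -- ρ = {z, u}
        apply endgame
        left
        refine Finset.Subset.antisymm ?_ ?_
        · intro w hw
          have := hρT hw
          simp only [Finset.mem_insert, Finset.mem_singleton] at this ⊢
          rcases this with h0 | h0 | h0
          · tauto
          · tauto
          · exact absurd (h0 ▸ hw) hvρ
        · intro w hw
          simp only [Finset.mem_insert, Finset.mem_singleton] at hw
          rcases hw with rfl | rfl
          · exact hzρ
          · exact huρ
    · have hvρ : v ∈ ρ := huvρ.resolve_left huρ
      apply endgame
      right
      refine Finset.Subset.antisymm ?_ ?_
      · intro w hw
        have := hρT hw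
        simp only [Finset.mem_insert, Finset.mem_singleton] at this ⊢
        rcases this with h0 | h0 | h0
        · tauto
        · exact absurd (h0 ▸ hw) huρ
        · tauto
      · intro w hw
        simp only [Finset.mem_insert, Finset.mem_singleton] at hw
        rcases hw with rfl | rfl
        · exact hzρ
        · exact hvρ
  by_cases hue : u ∈ e
  · by_cases hve : v ∈ e
    · exfalso
      apply hee
      refine (Finset.eq_of_subset_of_card_le ?_ ?_).symm
      · intro w hw
        rcases Finset.mem_insert.1 hw with rfl | hw2
        · exact hue
        · exact (Finset.mem_singleton.1 hw2) ▸ hve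
      · rw [hec, Finset.card_pair hne]
    · obtain ⟨z, hzu, hez⟩ := exists_pair_of_mem hue hec
      have hzv : z ≠ v := fun hzv => hve (hzv ▸ (hez ▸ (by simp : z ∈ ({u, z} : Finset V))))
      exact main z hzu hzv
        (by rw [hez, xi_pair, cmap_of_ne hne, cmap_of_ne hzv]) (Or.inl hez)
  · by_cases hve : v ∈ e
    · obtain ⟨z, hzv, hez⟩ := exists_pair_of_mem hve hec
      have hzu : z ≠ u := fun hzu => hue (hzu ▸ (hez ▸ (by simp : z ∈ ({v, z} : Finset V))))
      exact main z hzu hzv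
        (by rw [hez, xi_pair, cmap_v, cmap_of_ne hzv]) (Or.inr hez)
    · left
      have hxe : xi u v e = e := xi_of_fixed hve
      have hvρ : v ∉ ρ := by
        intro hv
        apply hue
        have h0 : cmap u v v ∈ xi u v ρ := Finset.mem_image_of_mem _ hv
        rw [hxiρ, hxe, cmap_v] at h0
        exact h0
      rw [← xi_of_fixed hvρ, hxiρ, hxe]

lemma reach_singleton_mem (hK : IsComplex K) {e₀ : Finset V} {x w : V}
    (hx : ({x} : Finset V) ∈ K) (hr : (vertGraph K prec e₀).Reachable x w) :
    ({w} : Finset V) ∈ K := by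
  suffices H : ∀ a b (p : (vertGraph K prec e₀).Walk a b),
      ({a} : Finset V) ∈ K → ({b} : Finset V) ∈ K by
    obtain ⟨p⟩ := hr; exact H x w p hx
  intro a b p
  induction p with
  | nil => exact fun h0 => h0
  | cons ha _ ih =>
    intro h0
    exact ih (mem_of_sub hK ha.2.1 (Finset.singleton_subset_iff.2 (by simp))
      ⟨_, Finset.mem_singleton_self _⟩)

lemma reach_transfer {α β : Type*} {G : SimpleGraph α} {G' : SimpleGraph β} (f : α → β)
    (hadj : ∀ a b, G.Adj a b → f a = f b ∨ G'.Adj (f a) (f b)) {p q : α}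
    (hr : G.Reachable p q) : G'.Reachable (f p) (f q) := by
  obtain ⟨w⟩ := hr
  induction w with
  | nil => exact SimpleGraph.Reachable.refl _
  | cons ha _ ih =>
    rcases hadj _ _ ha with he | h0
    · rw [he]; exact ih
    · exact (h0.reachable).trans ih

lemma leastvert_exists (hK : IsComplex K) (hprec : PrecOK K h prec) {e₀ : Finset V} {p₀ : V}
    (hp₀ : ({p₀} : Finset V) ∈ K) : ∃ m, LeastVert (vertGraph K prec e₀) prec p₀ m := by
  classical
  obtain ⟨m', hm', hmin⟩ := exists_min_fin hprec
    ((Finset.univ.filter (fun z => (vertGraph K prec e₀).Reachable p₀ z)).image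
      (fun z => ({z} : Finset V)))
    (by
      intro s hs
      obtain ⟨z, hz, rfl⟩ := Finset.mem_image.1 hs
      exact reach_singleton_mem hK hp₀ (Finset.mem_filter.1 hz).2)
    ⟨{p₀}, Finset.mem_image_of_mem _
      (Finset.mem_filter.2 ⟨Finset.mem_univ _, SimpleGraph.Reachable.refl _⟩)⟩
  obtain ⟨m, hm, rfl⟩ := Finset.mem_image.1 hm'
  refine ⟨m, (Finset.mem_filter.1 hm).2, fun w' hw' => ?_⟩
  rcases hmin {w'} (Finset.mem_image_of_mem _
      (Finset.mem_filter.2 ⟨Finset.mem_univ _, hw'⟩)) with heq | hp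
  · exact Or.inl (Finset.singleton_inj.1 heq).symm
  · exact Or.inr hp

lemma reach_to_v (hne : u ≠ v) {prec' : Finset V → Finset V → Prop} {e' : Finset V} {a : V}
    (hr : (vertGraph (K.image (xi u v)) prec' e').Reachable a v) : a = v := by
  suffices H : ∀ b c (p : (vertGraph (K.image (xi u v)) prec' e').Walk b c),
      c = v → b = v by
    obtain ⟨p⟩ := hr; exact H a v p rfl
  intro b c p
  induction p with
  | nil => exact fun h0 => h0
  | @cons b d c ha _ ih =>
    intro hc
    rw [ih hc] at ha
    exfalso
    obtain ⟨σ, hσ, hxσ⟩ := Finset.mem_image.1 ha.2.1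
    have hv : v ∈ xi u v σ := hxσ.symm ▸ (show v ∈ ({b, v} : Finset V) by simp)
    obtain ⟨w, _, hw⟩ := Finset.mem_image.1 hv
    exact absurd hw (cmap_ne_v hne w)

/-- the relation obtained from `G`-reachability by merging the components of `u` and `v`. -/
def EQV (G : SimpleGraph V) (u v a b : V) : Prop :=
  G.Reachable a b ∨ (G.Reachable a u ∧ G.Reachable v b) ∨ (G.Reachable a v ∧ G.Reachable u b)

lemma eqv_trans {G : SimpleGraph V} {a b c : V} (h1 : EQV G u v a b) (h2 : EQV G u v b c) :
    EQV G u v a c := by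
  rcases h1 with h1 | ⟨h1, h1'⟩ | ⟨h1, h1'⟩ <;> rcases h2 with h2 | ⟨h2, h2'⟩ | ⟨h2, h2'⟩
  · exact Or.inl (h1.trans h2)
  · exact Or.inr (Or.inl ⟨h1.trans h2, h2'⟩)
  · exact Or.inr (Or.inr ⟨h1.trans h2, h2'⟩)
  · exact Or.inr (Or.inl ⟨h1, h1'.trans h2⟩)
  · exact Or.inl (h1.trans ((h1'.trans h2).symm.trans h2'))
  · exact Or.inl (h1.trans h2')
  · exact Or.inr (Or.inr ⟨h1, h1'.trans h2⟩)
  · exact Or.inl (h1.trans h2')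
  · exact Or.inl (h1.trans ((h1'.trans h2).symm.trans h2'))

lemma eqv_symm {G : SimpleGraph V} {a b : V} (h1 : EQV G u v a b) : EQV G u v b a := by
  rcases h1 with h1 | ⟨h1, h2⟩ | ⟨h1, h2⟩
  · exact Or.inl h1.symm
  · exact Or.inr (Or.inr ⟨h2.symm, h1.symm⟩)
  · exact Or.inr (Or.inl ⟨h2.symm, h1.symm⟩)

lemma eqv_refl {G : SimpleGraph V} (a : V) : EQV G u v a a := Or.inl (SimpleGraph.Reachable.refl a)

end Aux2

/-- if `{u,v}` is admissible and the edge `e ∉ {{u,v}, e₁′, e₂′}` is paired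
with the vertex `r` in `K`, then `ξ(e)` is paired with `ξ(r)` in the contracted complex
`K′` with respect to the induced order. -/
theorem contraction_preserves_vertex_edge_pairs
    (K : Finset (Finset V)) (h : Finset V → ℝ) (u v : V)
    (prec : Finset V → Finset V → Prop) (t₁ t₂ e₁ e₁' e₂ e₂' : Finset V)
    (hK : IsComplex K) (hman : ClosedTwoManifold K) (hh : IsHeight K h)
    (hprec : PrecOK K h prec)
    (huv : ({u, v} : Finset V) ∈ K) (hne : u ≠ v) (huvprec : prec {u} {v})
    -- `t₁` and `t₂` are the two triangles of `K` containing `{u,v}`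
    (ht1 : t₁ ∈ K) (ht1c : t₁.card = 3) (ht1uv : ({u, v} : Finset V) ⊆ t₁)
    (ht2 : t₂ ∈ K) (ht2c : t₂.card = 3) (ht2uv : ({u, v} : Finset V) ⊆ t₂)
    (ht12 : t₁ ≠ t₂)
    (honly : ∀ t ∈ K, t.card = 3 → ({u, v} : Finset V) ⊆ t → t = t₁ ∨ t = t₂)
    -- `e₁ ≺ e₁'` are the two edges of `t₁` other than `{u,v}`,
    -- and `e₂ ≺ e₂'` those of `t₂`
    (he1 : e₁ ⊆ t₁) (he1c : e₁.card = 2) (he1uv : e₁ ≠ {u, v})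
    (he1' : e₁' ⊆ t₁) (he1'c : e₁'.card = 2) (he1'uv : e₁' ≠ {u, v})
    (he11' : e₁ ≠ e₁') (hp1 : prec e₁ e₁')
    (he2 : e₂ ⊆ t₂) (he2c : e₂.card = 2) (he2uv : e₂ ≠ {u, v})
    (he2' : e₂' ⊆ t₂) (he2'c : e₂'.card = 2) (he2'uv : e₂' ≠ {u, v})
    (he22' : e₂ ≠ e₂') (hp2 : prec e₂ e₂')
    -- admissibility of `{u,v}`
    (hlink : LinkCond K u v)
    (hpairuv : PairedVE K prec v {u, v})
    (hpair1 : PairedET K prec e₁' t₁)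
    (hpair2 : PairedET K prec e₂' t₂)
    -- the edge `e` and its persistence partner `r`
    (e : Finset V) (r : V)
    (hee : e ≠ {u, v}) (hee1 : e ≠ e₁') (hee2 : e ≠ e₂')
    (hpair : PairedVE K prec r e) :
    PairedVE (K.image (xi u v)) (precInd K u v prec) (cmap u v r) (xi u v e) := by
  classical
  obtain ⟨x, y, wx, wy, hexy, hxy, heK, hnR, hLx, hLy, hdisj⟩ := hpair
  set G : SimpleGraph V := vertGraph K prec e with hGdef
  set G' : SimpleGraph V := vertGraph (K.image (xi u v)) (precInd K u v prec) (xi u v e)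
    with hG'def
  have htrans := hprec.2.1
  have hec : e.card = 2 := by rw [hexy]; exact Finset.card_pair hxy
  have hME : MinPre K u v prec (xi u v e) e :=
    minpre_self hK hh hprec hne honly he1 he1c he1uv he1' he1'c he1'uv he11' hp1
      he2 he2c he2uv he2' he2'c he2'uv he22' hp2 hlink heK hec hee hee1 hee2
  have huK : ({u} : Finset V) ∈ K :=
    mem_of_sub hK huv (Finset.singleton_subset_iff.2 (by simp)) ⟨u, by simp⟩
  have hvK : ({v} : Finset V) ∈ K :=
    mem_of_sub hK huv (Finset.singleton_subset_iff.2 (by simp)) ⟨v, by simp⟩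
  have hxK : ({x} : Finset V) ∈ K :=
    mem_of_sub hK heK (by rw [hexy]; exact Finset.singleton_subset_iff.2 (by simp))
      ⟨x, by simp⟩
  have hyK : ({y} : Finset V) ∈ K :=
    mem_of_sub hK heK (by rw [hexy]; exact Finset.singleton_subset_iff.2 (by simp))
      ⟨y, by simp⟩
  have hadj_fwd : ∀ a b : V, G.Adj a b →
      cmap u v a = cmap u v b ∨ G'.Adj (cmap u v a) (cmap u v b) := by
    intro a b hab
    by_cases hc : cmap u v a = cmap u v b
    · exact Or.inl hc
    right
    have habK' : xi u v {a, b} ∈ K.image (xi u v) := Finset.mem_image_of_mem _ hab.2.1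
    obtain ⟨d, hd⟩ := minpre_exists hprec habK'
    refine ⟨hc, by rw [← xi_pair]; exact habK', ?_⟩
    have hpd : prec d e := by
      rcases hd.2.2 {a, b} hab.2.1 rfl with heq | hp
      · rw [← heq]; exact hab.2.2
      · exact htrans _ _ _ hp hab.2.2
    have hd' : MinPre K u v prec ({cmap u v a, cmap u v b}) d := by rwa [xi_pair] at hd
    exact precInd_intro hd' hME hpd
  have hadj_bwd : ∀ a b : V, G'.Adj a b →
      ∃ p q : V, G.Adj p q ∧ cmap u v p = a ∧ cmap u v q = b := by
    intro a b hab
    obtain ⟨hne_ab, habK', habp⟩ := hab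
    obtain ⟨d, hdK, hdx, hdmin⟩ := minpre_exists hprec habK'
    have hpde : prec d e := precInd_elim hprec ⟨hdK, hdx, hdmin⟩ hME habp
    have hd2 : (2 : ℕ) ≤ d.card := by
      calc (2 : ℕ) = ({a, b} : Finset V).card := (Finset.card_pair hne_ab).symm
        _ = (xi u v d).card := by rw [hdx]
        _ ≤ d.card := Finset.card_image_le
    have hdc : d.card = 2 := by
      by_contra hdcne
      have hd3 : d.card = 3 := le_antisymm (hman.1 d hdK) (by omega)
      have hninj : ¬ Set.InjOn (cmap u v) ↑d := by
        intro hinj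
        have h2 : (xi u v d).card = 2 := by rw [hdx]; exact Finset.card_pair hne_ab
        rw [xi, Finset.card_image_of_injOn hinj] at h2
        omega
      rw [Set.InjOn] at hninj
      push_neg at hninj
      obtain ⟨p, hp, q, hq, hfe, hpq⟩ := hninj
      have hp' : p ∈ d := hp
      have hq' : q ∈ d := hq
      have huvd : u ∈ d ∧ v ∈ d := by
        rcases cmap_eq_cases hne hpq hfe with ⟨h1, h2⟩ | ⟨h1, h2⟩
        · exact ⟨h1 ▸ hp', h2 ▸ hq'⟩
        · exact ⟨h2 ▸ hq', h1 ▸ hp'⟩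
      have hρK : d.erase u ∈ K := mem_of_sub hK hdK (Finset.erase_subset u d)
        ⟨v, Finset.mem_erase.2 ⟨hne.symm, huvd.2⟩⟩
      have hxρ : xi u v (d.erase u) = xi u v d := by
        conv_rhs => rw [← Finset.insert_erase huvd.1]
        rw [xi, xi, Finset.image_insert, cmap_of_ne hne]
        have hu : u ∈ (d.erase u).image (cmap u v) := Finset.mem_image.2
          ⟨v, Finset.mem_erase.2 ⟨hne.symm, huvd.2⟩, cmap_v u v⟩
        exact (Finset.insert_eq_self.2 hu).symm
      rcases hdmin (d.erase u) hρK (by rw [hxρ, hdx]) with heq | hp0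
      · have hcc : (d.erase u).card = 2 := by
          rw [Finset.card_erase_of_mem huvd.1, hd3]
        rw [heq, hd3] at hcc
        omega
      · exact absurd hp0 (prec_asymm hprec (prec_of_card hh hprec hρK hdK
          (Finset.erase_subset u d)
          (by rw [Finset.card_erase_of_mem huvd.1, hd3]; omega)))
    obtain ⟨p, q, hpq, hdeq⟩ := Finset.card_eq_two.1 hdc
    have hcne : cmap u v p ≠ cmap u v q := by
      intro hcc
      rw [hdeq, xi_pair, hcc] at hdx
      have ha0 : a = cmap u v q := by
        have h0 : a ∈ ({cmap u v q, cmap u v q} : Finset V) :=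
          hdx.symm ▸ Finset.mem_insert_self a {b}
        simpa using h0
      have hb0 : b = cmap u v q := by
        have h0 : b ∈ ({cmap u v q, cmap u v q} : Finset V) :=
          hdx.symm ▸ Finset.mem_insert_of_mem (Finset.mem_singleton_self b)
        simpa using h0
      exact hne_ab (ha0.trans hb0.symm)
    have hx2 : ({cmap u v p, cmap u v q} : Finset V) = {a, b} := by
      rw [← xi_pair, ← hdeq]; exact hdx
    have hDJ := pair_eq_pair_cases hcne hx2
    have hadjpq : G.Adj p q := ⟨hpq, hdeq ▸ hdK, hdeq ▸ hpde⟩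
    rcases hDJ with ⟨h1, h2⟩ | ⟨h1, h2⟩
    · exact ⟨p, q, hadjpq, h1.symm, h2.symm⟩
    · exact ⟨q, p, hadjpq.symm, h1.symm, h2.symm⟩
  have hreach_fwd : ∀ p q : V, G.Reachable p q → G'.Reachable (cmap u v p) (cmap u v q) :=
    fun p q hr => reach_transfer (cmap u v) hadj_fwd hr
  have hreach_bwd : ∀ a b : V, G'.Reachable a b → EQV G u v a b := by
    intro a b hr
    obtain ⟨w⟩ := hr
    induction w with
    | nil => exact eqv_refl _
    | @cons a₁ c₁ b₁ ha p ih =>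
      refine eqv_trans ?_ ih
      obtain ⟨p', q', hpq', hcp, hcq⟩ := hadj_bwd _ _ ha
      by_cases hpv : p' = v
      · by_cases hqv : q' = v
        · exact absurd (hpv.trans hqv.symm) hpq'.1
        · have ha' : a₁ = u := by rw [← hcp, hpv, cmap_v]
          rw [ha']
          refine Or.inr (Or.inl ⟨SimpleGraph.Reachable.refl u, ?_⟩)
          rw [← hcq, cmap_of_ne hqv]
          exact hpv ▸ hpq'.reachable
      · by_cases hqv : q' = v
        · have hb' : c₁ = u := by rw [← hcq, hqv, cmap_v]
          rw [hb']
          refine Or.inr (Or.inr ⟨?_, SimpleGraph.Reachable.refl u⟩)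
          rw [← hcp, cmap_of_ne hpv]
          exact hqv ▸ hpq'.reachable
        · rw [← hcp, ← hcq, cmap_of_ne hpv, cmap_of_ne hqv]
          exact Or.inl hpq'.reachable
  have heqv_cmap : ∀ p : V, EQV G u v p (cmap u v p) := by
    intro p
    by_cases hpv : p = v
    · rw [hpv, cmap_v]
      exact Or.inr (Or.inr ⟨SimpleGraph.Reachable.refl v, SimpleGraph.Reachable.refl u⟩)
    · rw [cmap_of_ne hpv]; exact eqv_refl _
  have hmaster_fwd : ∀ p q : V, G'.Reachable (cmap u v p) (cmap u v q) → EQV G u v p q :=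
    fun p q hr =>
      eqv_trans (heqv_cmap p) (eqv_trans (hreach_bwd _ _ hr) (eqv_symm (heqv_cmap q)))
  have hmaster_bwd : ∀ p q : V, EQV G u v p q → G'.Reachable (cmap u v p) (cmap u v q) := by
    rintro p q (h0 | ⟨h1, h2⟩ | ⟨h1, h2⟩)
    · exact hreach_fwd _ _ h0
    · refine (hreach_fwd _ _ h1).trans ?_
      have h3 := hreach_fwd _ _ h2
      rw [cmap_v] at h3
      rw [cmap_of_ne hne]
      exact h3
    · have h3 := hreach_fwd _ _ h1
      rw [cmap_v] at h3
      have h4 := hreach_fwd _ _ h2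
      rw [cmap_of_ne hne] at h4
      exact h3.trans h4
  have hvisol : ∀ a : V, G'.Reachable a v → a = v := fun a hr => reach_to_v hne hr
  have hmkInd : ∀ w w' : V, ({w} : Finset V) ∈ K → ({w'} : Finset V) ∈ K → w ≠ v → w' ≠ v →
      prec {w} {w'} → precInd K u v prec {w} {w'} := fun w w' hw hw' hwv hw'v hp =>
    precInd_intro (minpre_single hK hh hprec huv hne huvprec hw hwv)
      (minpre_single hK hh hprec huv hne huvprec hw' hw'v) hp
  have hmemE : ∀ p w' : V, ({p} : Finset V) ∈ K → EQV G u v p w' →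
      ({w'} : Finset V) ∈ K := by
    rintro p w' hp (h0 | ⟨h1, h2⟩ | ⟨h1, h2⟩)
    · exact reach_singleton_mem hK hp h0
    · exact reach_singleton_mem hK hvK h2
    · exact reach_singleton_mem hK huK h2
  have htransfer : ∀ p m : V, ({p} : Finset V) ∈ K → ({m} : Finset V) ∈ K →
      EQV G u v p m → m ≠ v →
      (∀ w', EQV G u v p w' → m = w' ∨ prec {m} {w'}) →
      LeastVert G' (precInd K u v prec) (cmap u v p) m := by
    intro p m hpK hmK hEQ hmv hcmp
    constructor
    · have h0 := hmaster_bwd p m hEQ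
      rwa [cmap_of_ne hmv] at h0
    · intro w' hw'
      have hw'v : w' ≠ v := by
        intro hww
        exact absurd (hvisol _ (hww ▸ hw')) (cmap_ne_v hne p)
      have heqv : EQV G u v p w' := hmaster_fwd p w' (by rwa [← cmap_of_ne hw'v] at hw')
      rcases hcmp w' heqv with h0 | h0
      · exact Or.inl h0
      · exact Or.inr (hmkInd m w' hmK (hmemE p w' hpK heqv) hmv hw'v h0)
  have hcxy : cmap u v x ≠ cmap u v y := by
    intro hc
    rcases cmap_eq_cases hne hxy hc with ⟨h1, h2⟩ | ⟨h1, h2⟩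
    · exact hee (by rw [hexy, h1, h2])
    · exact hee (by rw [hexy, h1, h2, Finset.pair_comm])
  have hfinish : ∀ WX WY : V, (¬ EQV G u v x y) →
      LeastVert G' (precInd K u v prec) (cmap u v x) WX →
      LeastVert G' (precInd K u v prec) (cmap u v y) WY →
      ((precInd K u v prec {WX} {WY} ∧ cmap u v r = WY) ∨
        (precInd K u v prec {WY} {WX} ∧ cmap u v r = WX)) →
      PairedVE (K.image (xi u v)) (precInd K u v prec) (cmap u v r) (xi u v e) := by
    intro WX WY hnE hLX hLY hD
    exact ⟨cmap u v x, cmap u v y, WX, WY, by rw [hexy, xi_pair], hcxy,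
      Finset.mem_image_of_mem _ heK, fun hr => hnE (hmaster_fwd x y hr), hLX, hLY, hD⟩
  rcases hprec.2.2.1 e heK {u, v} huv hee with hB | hA
  · -- e ≺ {u,v}
    obtain ⟨x₀, y₀, w₀, w₁, hpe₀, hxy₀, hm₀, hnR₀, hL₀, hL₁, hd₀⟩ := hpairuv
    have hlift : ∀ a b : V, G.Reachable a b → (vertGraph K prec {u, v}).Reachable a b := by
      intro a b hr
      have h0 := reach_transfer (G := G) (G' := vertGraph K prec {u, v}) id
        (fun a b hadj => Or.inr ⟨hadj.1, hadj.2.1, htrans _ _ _ hadj.2.2 hB⟩) hr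
      simpa using h0
    have hnRuvH : ¬ (vertGraph K prec {u, v}).Reachable u v := by
      rcases pair_eq_pair_cases hne hpe₀ with ⟨h1, h2⟩ | ⟨h1, h2⟩
      · intro h0
        exact hnR₀ (by rw [h1, h2]; exact h0)
      · intro h0
        exact hnR₀ (by rw [h1, h2]; exact h0.symm)
    have hvleast : ∀ w : V, (vertGraph K prec {u, v}).Reachable v w →
        v = w ∨ prec {v} {w} := by
      rcases hd₀ with ⟨hp₀, hv₀⟩ | ⟨hp₀, hv₀⟩
      · intro w hw
        have hy₀v : (vertGraph K prec {u, v}).Reachable y₀ v := hv₀.symm ▸ hL₁.1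
        have h0 := hL₁.2 w (hy₀v.trans hw)
        rwa [← hv₀] at h0
      · intro w hw
        have hx₀v : (vertGraph K prec {u, v}).Reachable x₀ v := hv₀.symm ▸ hL₀.1
        have h0 := hL₀.2 w (hx₀v.trans hw)
        rwa [← hv₀] at h0
    have hnRuvG : ¬ G.Reachable u v := fun h0 => hnRuvH (hlift _ _ h0)
    have hadj_e : (vertGraph K prec {u, v}).Adj x y := by
      refine ⟨hxy, ?_, ?_⟩
      · rw [← hexy]; exact heK
      · rw [← hexy]; exact hB
    have hX1 : ¬ (G.Reachable x u ∧ G.Reachable y v) := by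
      rintro ⟨h1, h2⟩
      exact hnRuvH (((hlift _ _ h1).symm.trans hadj_e.reachable).trans (hlift _ _ h2))
    have hX2 : ¬ (G.Reachable x v ∧ G.Reachable y u) := by
      rintro ⟨h1, h2⟩
      exact hnRuvH (((hlift _ _ h2).symm.trans hadj_e.reachable.symm).trans (hlift _ _ h1))
    have hnE : ¬ EQV G u v x y := by
      rintro (h0 | ⟨h1, h2⟩ | ⟨h1, h2⟩)
      · exact hnR h0
      · exact hX1 ⟨h1, h2.symm⟩
      · exact hX2 ⟨h1, h2.symm⟩
    have hchain : ∀ a d : V, (a = u ∨ prec {a} {u}) → (v = d ∨ prec {v} {d}) →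
        prec ({a} : Finset V) {d} := by
      rintro a d (rfl | h1) (rfl | h2)
      · exact huvprec
      · exact htrans _ _ _ huvprec h2
      · exact htrans _ _ _ h1 huvprec
      · exact htrans _ _ _ h1 (htrans _ _ _ huvprec h2)
    have hsideB : ∀ p wp : V, ({p} : Finset V) ∈ K → LeastVert G prec p wp →
        ¬ G.Reachable p v → wp ≠ v ∧ LeastVert G' (precInd K u v prec) (cmap u v p) wp := by
      intro p wp hpK hLp hpv
      have hwpv : wp ≠ v := fun h0 => hpv (h0 ▸ hLp.1)
      refine ⟨hwpv, htransfer p wp hpK (reach_singleton_mem hK hpK hLp.1)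
        (Or.inl hLp.1) hwpv ?_⟩
      rintro w' (h0 | ⟨h1, h2⟩ | ⟨h1, h2⟩)
      · exact hLp.2 w' h0
      · exact Or.inr (hchain _ _ (hLp.2 u h1) (hvleast w' (hlift _ _ h2)))
      · exact absurd h1 hpv
    by_cases hxv : G.Reachable x v
    · have hyvn : ¬ G.Reachable y v := fun h0 => hnR (hxv.trans h0.symm)
      obtain ⟨hwyv, hLY⟩ := hsideB y wy hyK hLy hyvn
      obtain ⟨m, hLm⟩ := leastvert_exists (e₀ := e) hK hprec huK
      have hmv : m ≠ v := fun h0 => hnRuvG (h0 ▸ hLm.1)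
      have hwxv : wx = v := by
        rcases hLx.2 v hxv with h0 | h0
        · exact h0
        · rcases hvleast wx (hlift _ _ (hxv.symm.trans hLx.1)) with h2 | h2
          · exact h2.symm
          · exact absurd h0 (prec_asymm hprec h2)
      have hLX : LeastVert G' (precInd K u v prec) (cmap u v x) m := by
        refine htransfer x m hxK (reach_singleton_mem hK huK hLm.1)
          (Or.inr (Or.inr ⟨hxv, hLm.1⟩)) hmv ?_
        rintro w' (h0 | ⟨h1, h2⟩ | ⟨h1, h2⟩)
        · exact Or.inr (hchain _ _ (hLm.2 u (SimpleGraph.Reachable.refl u))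
            (hvleast w' (hlift _ _ (hxv.symm.trans h0))))
        · exact absurd (h1.symm.trans hxv) hnRuvG
        · exact hLm.2 w' h2
      rcases hdisj with ⟨hp, hreq⟩ | ⟨hp, hreq⟩
      · refine hfinish m wy hnE hLX hLY (Or.inl ⟨?_, by rw [hreq]; exact cmap_of_ne hwyv⟩)
        have hpv' : prec ({v} : Finset V) {wy} := hwxv ▸ hp
        refine hmkInd m wy (reach_singleton_mem hK huK hLm.1)
          (reach_singleton_mem hK hyK hLy.1) hmv hwyv ?_
        exact hchain _ _ (hLm.2 u (SimpleGraph.Reachable.refl u)) (Or.inr hpv')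
      · exfalso
        have hvwy : (vertGraph K prec {u, v}).Reachable v wy :=
          ((hlift _ _ hxv).symm.trans hadj_e.reachable).trans (hlift _ _ hLy.1)
        rcases hvleast wy hvwy with h0 | h0
        · exact hprec.1 _ (h0 ▸ (hwxv ▸ hp))
        · exact prec_asymm hprec h0 (hwxv ▸ hp)
    · by_cases hyv : G.Reachable y v
      · obtain ⟨hwxv, hLX⟩ := hsideB x wx hxK hLx hxv
        obtain ⟨m, hLm⟩ := leastvert_exists (e₀ := e) hK hprec huK
        have hmv : m ≠ v := fun h0 => hnRuvG (h0 ▸ hLm.1)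
        have hwyv : wy = v := by
          rcases hLy.2 v hyv with h0 | h0
          · exact h0
          · rcases hvleast wy (hlift _ _ (hyv.symm.trans hLy.1)) with h2 | h2
            · exact h2.symm
            · exact absurd h0 (prec_asymm hprec h2)
        have hLY : LeastVert G' (precInd K u v prec) (cmap u v y) m := by
          refine htransfer y m hyK (reach_singleton_mem hK huK hLm.1)
            (Or.inr (Or.inr ⟨hyv, hLm.1⟩)) hmv ?_
          rintro w' (h0 | ⟨h1, h2⟩ | ⟨h1, h2⟩)
          · exact Or.inr (hchain _ _ (hLm.2 u (SimpleGraph.Reachable.refl u))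
              (hvleast w' (hlift _ _ (hyv.symm.trans h0))))
          · exact absurd (h1.symm.trans hyv) hnRuvG
          · exact hLm.2 w' h2
        rcases hdisj with ⟨hp, hreq⟩ | ⟨hp, hreq⟩
        · exfalso
          have hvwx : (vertGraph K prec {u, v}).Reachable v wx :=
            ((hlift _ _ hyv).symm.trans hadj_e.reachable.symm).trans (hlift _ _ hLx.1)
          rcases hvleast wx hvwx with h0 | h0
          · exact hprec.1 _ (h0 ▸ (hwyv ▸ hp))
          · exact prec_asymm hprec h0 (hwyv ▸ hp)
        · refine hfinish wx m hnE hLX hLY (Or.inr ⟨?_, by rw [hreq]; exact cmap_of_ne hwxv⟩)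
          have hpv' : prec ({v} : Finset V) {wx} := hwyv ▸ hp
          refine hmkInd m wx (reach_singleton_mem hK huK hLm.1)
            (reach_singleton_mem hK hxK hLx.1) hmv hwxv ?_
          exact hchain _ _ (hLm.2 u (SimpleGraph.Reachable.refl u)) (Or.inr hpv')
      · obtain ⟨hwxv, hLX⟩ := hsideB x wx hxK hLx hxv
        obtain ⟨hwyv, hLY⟩ := hsideB y wy hyK hLy hyv
        apply hfinish wx wy hnE hLX hLY
        have hwxK : ({wx} : Finset V) ∈ K := reach_singleton_mem hK hxK hLx.1
        have hwyK : ({wy} : Finset V) ∈ K := reach_singleton_mem hK hyK hLy.1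
        rcases hdisj with ⟨hp, hreq⟩ | ⟨hp, hreq⟩
        · exact Or.inl ⟨hmkInd wx wy hwxK hwyK hwxv hwyv hp, by rw [hreq]; exact cmap_of_ne hwyv⟩
        · exact Or.inr ⟨hmkInd wy wx hwyK hwxK hwyv hwxv hp, by rw [hreq]; exact cmap_of_ne hwxv⟩
  · -- {u,v} ≺ e
    have hRuv : G.Reachable u v := SimpleGraph.Adj.reachable ⟨hne, huv, hA⟩
    have heqvR : ∀ a b : V, EQV G u v a b → G.Reachable a b := by
      rintro a b (h0 | ⟨h1, h2⟩ | ⟨h1, h2⟩)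
      · exact h0
      · exact h1.trans (hRuv.trans h2)
      · exact h1.trans (hRuv.symm.trans h2)
    have hside : ∀ p wp : V, ({p} : Finset V) ∈ K → LeastVert G prec p wp →
        wp ≠ v ∧ LeastVert G' (precInd K u v prec) (cmap u v p) wp := by
      intro p wp hpK hLp
      have hwpv : wp ≠ v := by
        intro hwv
        have hpu : G.Reachable p u := (hwv ▸ hLp.1).trans hRuv.symm
        rcases hLp.2 u hpu with h0 | h0
        · exact hne (h0 ▸ hwv)
        · exact prec_asymm hprec huvprec (hwv ▸ h0)
      exact ⟨hwpv, htransfer p wp hpK (reach_singleton_mem hK hpK hLp.1) (Or.inl hLp.1) hwpv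
        (fun w' hE => hLp.2 w' (heqvR p w' hE))⟩
    obtain ⟨hwxv, hLX⟩ := hside x wx hxK hLx
    obtain ⟨hwyv, hLY⟩ := hside y wy hyK hLy
    apply hfinish wx wy (fun hE => hnR (heqvR x y hE)) hLX hLY
    have hwxK : ({wx} : Finset V) ∈ K := reach_singleton_mem hK hxK hLx.1
    have hwyK : ({wy} : Finset V) ∈ K := reach_singleton_mem hK hyK hLy.1
    rcases hdisj with ⟨hp, hreq⟩ | ⟨hp, hreq⟩
    · exact Or.inl ⟨hmkInd wx wy hwxK hwyK hwxv hwyv hp, by rw [hreq]; exact cmap_of_ne hwyv⟩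
    · exact Or.inr ⟨hmkInd wy wx hwyK hwxK hwyv hwxv hp, by rw [hreq]; exact cmap_of_ne hwxv⟩
end
end
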